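/- The monogenic inversion J_3, defined on smooth M_k-valued functions by J_3[f](x,u) = (x/‖x‖^{m-2}) f(x/‖x‖², x u x/‖x‖²), is an involution up to sign: J_3² = -1, i.e., J_3[J_3[f]](x,u) = -f(x,u) for all x ≠ 0. -/

import Mathlib

/-- The quadratic form `x ↦ -‖x‖²` on `ℝ^m`, generating the Clifford algebra `Cl_m`. -/
noncomputable def negQ (m : ℕ) : QuadraticForm ℝ (EuclideanSpace ℝ (Fin m)) :=
  -LinearMap.BilinMap.toQuadraticMap (innerₗ (EuclideanSpace ℝ (Fin m)) :
      LinearMap.BilinForm ℝ (EuclideanSpace ℝ (Fin m)))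

/-- The vector `x u x / ‖x‖²` of `ℝ^m`, i.e. `ω u ω` for `ω = x/‖x‖`: the Clifford element
`ι x * ι u * ι x / ‖x‖²` equals `ι (reflMap x u)`. -/
noncomputable def reflMap {m : ℕ} (x u : EuclideanSpace ℝ (Fin m)) :
    EuclideanSpace ℝ (Fin m) :=
  u - ((2 * (inner ℝ u x : ℝ)) / ‖x‖ ^ 2) • x

/-- Monogenic inversion: `J₃[f](x,u) = (x/‖x‖^{m-2}) f(x/‖x‖², x u x/‖x‖²)`. -/
noncomputable def J3 {m : ℕ}
    (f : EuclideanSpace ℝ (Fin m) → EuclideanSpace ℝ (Fin m) → CliffordAlgebra (negQ m)) :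
    EuclideanSpace ℝ (Fin m) → EuclideanSpace ℝ (Fin m) → CliffordAlgebra (negQ m) :=
  fun x u =>
    (‖x‖ ^ ((m : ℤ) - 2))⁻¹ •
      (CliffordAlgebra.ι (negQ m) x * f ((‖x‖ ^ 2)⁻¹ • x) (reflMap x u))

lemma negQ_apply {m : ℕ} (x : EuclideanSpace ℝ (Fin m)) : negQ m x = -(‖x‖ ^ 2) := by
  have : negQ m x = -(inner ℝ x x : ℝ) := rfl
  rw [this, real_inner_self_eq_norm_sq]

lemma reflMap_smul {m : ℕ} (x u : EuclideanSpace ℝ (Fin m)) (c : ℝ) (hc : c ≠ 0) :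
    reflMap (c • x) u = reflMap x u := by
  unfold reflMap
  rw [real_inner_smul_right, norm_smul, smul_smul]
  congr 2
  rw [Real.norm_eq_abs, mul_pow, sq_abs]
  have h2 : c ^ 2 * c⁻¹ ^ 2 = 1 := by
    rw [← mul_pow, mul_inv_cancel₀ hc, one_pow]
  linear_combination ((inner ℝ u x : ℝ) * ‖x‖⁻¹ ^ 2 * 2) * h2

lemma reflMap_invol {m : ℕ} (x u : EuclideanSpace ℝ (Fin m)) (hx : x ≠ 0) :
    reflMap x (reflMap x u) = u := by
  have hn : (‖x‖ : ℝ) ≠ 0 := norm_ne_zero_iff.mpr hx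
  have hxx : (inner ℝ x x : ℝ) = ‖x‖ ^ 2 := real_inner_self_eq_norm_sq x
  unfold reflMap
  rw [inner_sub_left, real_inner_smul_left, hxx]
  have ht : (2 * ((inner ℝ u x : ℝ) - 2 * (inner ℝ u x : ℝ) / ‖x‖ ^ 2 * ‖x‖ ^ 2) / ‖x‖ ^ 2)
      = -(2 * (inner ℝ u x : ℝ) / ‖x‖ ^ 2) := by field_simp; ring
  rw [ht]
  module

/-- The monogenic inversion `J₃` is an involution up to sign: `J₃² = -1`, i.e.
`J₃[J₃[f]](x,u) = -f(x,u)` for all `x ≠ 0` (here `f(x,·)` is a `k`-homogeneous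
polynomial, e.g. monogenic, in `u`). -/
theorem stmt11 (m k : ℕ)
    (f : EuclideanSpace ℝ (Fin m) → EuclideanSpace ℝ (Fin m) → CliffordAlgebra (negQ m))
    (hf : ∀ (x : EuclideanSpace ℝ (Fin m)) (c : ℝ) (u : EuclideanSpace ℝ (Fin m)),
      f x (c • u) = c ^ k • f x u)
    (x u : EuclideanSpace ℝ (Fin m)) (hx : x ≠ 0) :
    J3 (J3 f) x u = -f x u := by
  have hn : (‖x‖ : ℝ) ≠ 0 := norm_ne_zero_iff.mpr hx
  have hc : ((‖x‖:ℝ) ^ 2)⁻¹ ≠ 0 := by positivity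
  have hny : ‖((‖x‖:ℝ) ^ 2)⁻¹ • x‖ = ‖x‖⁻¹ := by
    rw [norm_smul, Real.norm_eq_abs, abs_inv, abs_pow, abs_norm]
    field_simp
  have hyx : (((‖x‖:ℝ)⁻¹ ^ 2)⁻¹ : ℝ) • (((‖x‖:ℝ) ^ 2)⁻¹ • x) = x := by
    rw [smul_smul]
    have : (((‖x‖:ℝ)⁻¹ ^ 2)⁻¹ : ℝ) * (‖x‖ ^ 2)⁻¹ = 1 := by field_simp
    rw [this, one_smul]
  have hrefl : reflMap (((‖x‖:ℝ) ^ 2)⁻¹ • x) (reflMap x u) = u := by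
    rw [reflMap_smul x _ _ hc, reflMap_invol x u hx]
  have hsq : CliffordAlgebra.ι (negQ m) x * CliffordAlgebra.ι (negQ m) x
      = algebraMap ℝ _ (-(‖x‖ ^ 2)) := by
    rw [CliffordAlgebra.ι_sq_scalar, negQ_apply]
  have hzp : (((‖x‖:ℝ)⁻¹) ^ ((m:ℤ) - 2))⁻¹ = ‖x‖ ^ ((m:ℤ) - 2) := by
    rw [inv_zpow, inv_inv]
  simp only [J3, hny, hyx, hrefl, hzp, map_smul]
  rw [mul_smul_comm, smul_smul, inv_mul_cancel₀ (zpow_ne_zero _ hn), one_smul,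
    smul_mul_assoc, mul_smul_comm, ← mul_assoc, hsq, ← Algebra.smul_def, smul_smul]
  rw [show ((‖x‖:ℝ) ^ 2)⁻¹ * -(‖x‖ ^ 2) = -1 by field_simp]
  rw [neg_smul, one_smul]
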